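/- Let K be a finite field of characteristic p with q elements, and let r be a positive integer with p^r > q. Then there is no injective group homomorphism from (ℤ/pℤ)^r into PGL₂(K), the quotient of GL₂(K) by its center. -/

import Mathlib

open Matrix

/-- Let `K` be a finite field of characteristic `p` with `q` elements, and let `r` be a
positive integer with `p ^ r > q`. Then there is no injective group homomorphism from
`(ℤ/pℤ)^r` into `PGL₂(K) = GL₂(K) / center`. -/
theorem no_injective_hom_elementary_abelian_to_PGL2
    {K : Type*} [Field K] [Fintype K] {p : ℕ} [Fact p.Prime] [CharP K p]
    (r : ℕ) (hr : 0 < r) (hq : Fintype.card K < p ^ r) :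
    ¬ ∃ φ : Multiplicative (Fin r → ZMod p) →*
        (GL (Fin 2) K ⧸ Subgroup.center (GL (Fin 2) K)),
      Function.Injective φ := by
  rintro ⟨φ, hφ⟩
  set q := Fintype.card K with hqdef
  have hp : p.Prime := Fact.out
  obtain ⟨n, -, hcard⟩ := FiniteField.card K p
  have hpq : p ∣ q := by rw [hqdef, hcard]; exact dvd_pow_self p n.pos.ne'
  have hq1 : 1 ≤ q := Fintype.card_pos
  have hdom : Nat.card (Multiplicative (Fin r → ZMod p)) = p ^ r := by
    simp [Nat.card_eq_fintype_card, ZMod.card]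
  have hdvd1 : p ^ r ∣ Nat.card (GL (Fin 2) K ⧸ Subgroup.center (GL (Fin 2) K)) := by
    rw [← hdom]
    exact Subgroup.card_dvd_of_injective φ hφ
  have hdvd2 : p ^ r ∣ Nat.card (GL (Fin 2) K) :=
    hdvd1.trans (Subgroup.card_quotient_dvd_card _)
  have hGL : Nat.card (GL (Fin 2) K) = (q ^ 2 - 1) * (q ^ 2 - q) := by
    rw [Matrix.card_GL_field]
    simp [Fin.prod_univ_two]
    rfl
  rw [hGL] at hdvd2
  -- p is coprime to q ^ 2 - 1 and q - 1
  have key : ∀ m : ℕ, p ∣ m → 1 ≤ m → ¬ p ∣ m - 1 := by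
    intro m hm h1 hd
    have : p ∣ 1 := by
      have := Nat.dvd_sub hm hd
      rwa [Nat.sub_sub_self h1] at this
    exact hp.one_lt.ne' (Nat.dvd_one.mp this)
  have hcop1 : Nat.Coprime (p ^ r) (q ^ 2 - 1) :=
    Nat.Coprime.pow_left _ ((hp.coprime_iff_not_dvd).mpr
      (key _ (hpq.trans (dvd_pow_self q two_ne_zero)) (Nat.one_le_pow _ _ hq1)))
  have hcopq1 : Nat.Coprime (p ^ r) (q - 1) :=
    Nat.Coprime.pow_left _ ((hp.coprime_iff_not_dvd).mpr (key _ hpq hq1))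
  have h3 : p ^ r ∣ q ^ 2 - q := (Nat.Coprime.dvd_of_dvd_mul_left hcop1) hdvd2
  have h4 : q ^ 2 - q = q * (q - 1) := by
    rw [Nat.mul_sub, mul_one, sq]
  rw [h4] at h3
  have h5 : p ^ r ∣ q := (Nat.Coprime.dvd_of_dvd_mul_right hcopq1) h3
  exact absurd (Nat.le_of_dvd hq1 h5) (not_le.mpr hq)
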